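/- arXiv:2409.13195 — 3 statements merged into one kernel-verified Lean document; each statement's English description precedes it below -/
import Mathlib

section
/- Let p̂(t) and p̂(t+Δt) be given by affine maps of (p₀,k): p̂(t) = p₀ + C_t k + d_t and p̂(t+Δt) = p₀ + C_{t+Δt} k + d_{t+Δt}. Fix an obstacle Õ ⊂ ℝ^{n_p}, and define B_t = {q ∈ ℝ^{n_p} : q + C_t k + d_t ∈ Õ} and B_{t+Δt} = {q : q + C_{t+Δt} k + d_{t+Δt} ∈ Õ} (with the fixed k). If there exists α ∈ [0,1] with p̂(t) + α(p̂(t+Δt) − p̂(t)) ∈ Õ, then p₀ ∈ conv(B_t ∪ B_{t+Δt}); specifically p₀ = p₁ + α(p₂ − p₁) with p₁ = p₀ + α p̂_d ∈ B_t and p₂ = p₀ + (α−1) p̂_d ∈ B_{t+Δt}, where p̂_d = (C_{t+Δt} − C_t)k + d_{t+Δt} − d_t. -/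
/-- If the interpolated model trajectory point lies in the obstacle, then the
initial state lies in the convex hull of the backprojected obstacles; in fact
`p₀ = p₁ + α(p₂ − p₁)` with explicit `p₁ ∈ B_t`, `p₂ ∈ B_{t+Δt}`. -/
theorem avoid_set_convex_hull_membership
    {np nk : ℕ}
    (p0 : Fin np → ℝ) (k : Fin nk → ℝ)
    (Ct Ct' : Matrix (Fin np) (Fin nk) ℝ) (dt dt' : Fin np → ℝ)
    (O : Set (Fin np → ℝ)) (α : ℝ) (hα0 : 0 ≤ α) (hα1 : α ≤ 1)
    (hcol : (p0 + Ct.mulVec k + dt) +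
        α • ((p0 + Ct'.mulVec k + dt') - (p0 + Ct.mulVec k + dt)) ∈ O) :
    (p0 + α • ((Ct' - Ct).mulVec k + dt' - dt))
        ∈ {q : Fin np → ℝ | q + Ct.mulVec k + dt ∈ O} ∧
    (p0 + (α - 1) • ((Ct' - Ct).mulVec k + dt' - dt))
        ∈ {q : Fin np → ℝ | q + Ct'.mulVec k + dt' ∈ O} ∧
    p0 = (p0 + α • ((Ct' - Ct).mulVec k + dt' - dt)) +
        α • ((p0 + (α - 1) • ((Ct' - Ct).mulVec k + dt' - dt)) -
             (p0 + α • ((Ct' - Ct).mulVec k + dt' - dt))) ∧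
    p0 ∈ convexHull ℝ
      ({q : Fin np → ℝ | q + Ct.mulVec k + dt ∈ O} ∪
       {q : Fin np → ℝ | q + Ct'.mulVec k + dt' ∈ O}) := by
  have hsub : (Ct' - Ct).mulVec k = Ct'.mulVec k - Ct.mulVec k :=
    Matrix.sub_mulVec Ct' Ct k
  have h1 : (p0 + α • ((Ct' - Ct).mulVec k + dt' - dt))
      ∈ {q : Fin np → ℝ | q + Ct.mulVec k + dt ∈ O} := by
    show _ ∈ O
    have he : (p0 + α • ((Ct' - Ct).mulVec k + dt' - dt)) + Ct.mulVec k + dt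
        = (p0 + Ct.mulVec k + dt) +
          α • ((p0 + Ct'.mulVec k + dt') - (p0 + Ct.mulVec k + dt)) := by
      rw [hsub]; module
    rw [he]; exact hcol
  have h2 : (p0 + (α - 1) • ((Ct' - Ct).mulVec k + dt' - dt))
      ∈ {q : Fin np → ℝ | q + Ct'.mulVec k + dt' ∈ O} := by
    show _ ∈ O
    have he : (p0 + (α - 1) • ((Ct' - Ct).mulVec k + dt' - dt)) + Ct'.mulVec k + dt'
        = (p0 + Ct.mulVec k + dt) +
          α • ((p0 + Ct'.mulVec k + dt') - (p0 + Ct.mulVec k + dt)) := by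
      rw [hsub]; module
    rw [he]; exact hcol
  refine ⟨h1, h2, by module, ?_⟩
  have := convex_convexHull ℝ
      ({q : Fin np → ℝ | q + Ct.mulVec k + dt ∈ O} ∪
       {q : Fin np → ℝ | q + Ct'.mulVec k + dt' ∈ O})
  have hm1 := subset_convexHull ℝ
      ({q : Fin np → ℝ | q + Ct.mulVec k + dt ∈ O} ∪
       {q : Fin np → ℝ | q + Ct'.mulVec k + dt' ∈ O}) (Set.mem_union_left _ h1)
  have hm2 := subset_convexHull ℝ
      ({q : Fin np → ℝ | q + Ct.mulVec k + dt ∈ O} ∪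
       {q : Fin np → ℝ | q + Ct'.mulVec k + dt' ∈ O}) (Set.mem_union_right _ h2)
  have hcomb := this hm1 hm2 (by linarith : (0:ℝ) ≤ 1 - α) hα0 (by ring)
  convert hcomb using 1
  module
end

section
/- The Pontryagin difference of an H-polytope H(A,b) by a compact set E equals the H-polytope H(A, b − c), where cᵢ = sup_{e ∈ E} (Ae)ᵢ is the support function of E in the direction of the i-th row of A. -/
/-- Pontryagin difference: `A ⊖ E = {x : x + e ∈ A for all e ∈ E}`. -/
def pontryaginDiff {n : ℕ} (A E : Set (Fin n → ℝ)) : Set (Fin n → ℝ) :=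
  {x | ∀ e ∈ E, x + e ∈ A}

/-- The Pontryagin difference of an H-polytope by a nonempty compact set `E`
is the H-polytope obtained by tightening each offset by the support function
of `E` in the direction of the corresponding row. -/
theorem hpolytope_pontryagin_diff
    (n h : ℕ) (A : Matrix (Fin h) (Fin n) ℝ) (b : Fin h → ℝ)
    (E : Set (Fin n → ℝ)) (hE : E.Nonempty) (hEc : IsCompact E) :
    pontryaginDiff {x : Fin n → ℝ | A.mulVec x ≤ b} E
      = {x : Fin n → ℝ |
          A.mulVec x ≤ b - fun i => sSup ((fun e => A.mulVec e i) '' E)} := by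
  have hcont : ∀ i : Fin h, Continuous fun e : Fin n → ℝ => A.mulVec e i := by
    intro i
    simp only [Matrix.mulVec, dotProduct]
    exact continuous_finset_sum _ fun j _ =>
      (continuous_const.mul (continuous_apply j))
  ext x
  simp only [pontryaginDiff, Set.mem_setOf_eq]
  constructor
  · intro hx i
    have hne : ((fun e => A.mulVec e i) '' E).Nonempty := hE.image _
    have hle : sSup ((fun e => A.mulVec e i) '' E) ≤ b i - A.mulVec x i := by
      apply csSup_le hne
      rintro y ⟨e, he, rfl⟩
      have := hx e he i
      simp [Matrix.mulVec_add] at this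
      linarith
    simp only [Pi.sub_apply]
    linarith
  · intro hx e he i
    have hbdd : BddAbove ((fun e => A.mulVec e i) '' E) :=
      (hEc.image (hcont i)).bddAbove
    have hmem : A.mulVec e i ≤ sSup ((fun e => A.mulVec e i) '' E) :=
      le_csSup hbdd ⟨e, he, rfl⟩
    have := hx i
    simp only [Pi.sub_apply] at this
    simp [Matrix.mulVec_add]
    linarith
end

section
/- Let Õ ⊂ ℝ^{n_p} be convex. With the notation of the avoid-set theorem, the set of p₀ such that the interpolated segment {p̂(t) + α(p̂(t+Δt) − p̂(t)) : α ∈ [0,1]} (with fixed k) intersects Õ is contained in conv(B_t ∪ B_{t+Δt}), where B_s = Õ − (C_s k + d_s) for s ∈ {t, t+Δt}; moreover this containment is actually an equality when Õ is convex. -/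
/-- For a convex obstacle, the set of initial states whose interpolated model
segment hits the obstacle equals the convex hull of the two translated
backprojections. -/
theorem avoid_set_eq_convexHull
    {np nk : ℕ} (k : Fin nk → ℝ)
    (Ct Ct' : Matrix (Fin np) (Fin nk) ℝ) (dt dt' : Fin np → ℝ)
    (O : Set (Fin np → ℝ)) (hO : Convex ℝ O) :
    {p0 : Fin np → ℝ | ∃ α ∈ Set.Icc (0 : ℝ) 1,
        (p0 + Ct.mulVec k + dt) +
          α • ((p0 + Ct'.mulVec k + dt') - (p0 + Ct.mulVec k + dt)) ∈ O}
      = convexHull ℝ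
          (((fun x => x - (Ct.mulVec k + dt)) '' O) ∪
           ((fun x => x - (Ct'.mulVec k + dt')) '' O)) := by
  rcases O.eq_empty_or_nonempty with rfl | hne
  · simp
  have himg : ∀ u : Fin np → ℝ, (fun x => x - u) '' O = (fun x => -u + x) '' O := by
    intro u; apply Set.image_congr'; intro x; rw [sub_eq_neg_add]
  have hA : Convex ℝ ((fun x => x - (Ct.mulVec k + dt)) '' O) := by
    rw [himg]; exact hO.translate _
  have hB : Convex ℝ ((fun x => x - (Ct'.mulVec k + dt')) '' O) := by
    rw [himg]; exact hO.translate _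
  rw [Convex.convexHull_union hA hB (hne.image _) (hne.image _)]
  ext p0
  simp only [Set.mem_setOf_eq, mem_convexJoin]
  constructor
  · rintro ⟨α, ⟨h0, h1⟩, ho⟩
    set o := (p0 + Ct.mulVec k + dt) +
        α • ((p0 + Ct'.mulVec k + dt') - (p0 + Ct.mulVec k + dt)) with hoo
    refine ⟨o - (Ct.mulVec k + dt), ⟨o, ho, rfl⟩, o - (Ct'.mulVec k + dt'),
      ⟨o, ho, rfl⟩, 1 - α, α, by linarith, h0, by ring, ?_⟩
    rw [hoo]
    module
  · rintro ⟨a, ⟨o1, ho1, rfl⟩, b, ⟨o2, ho2, rfl⟩, s, t, hs, ht, hst, hp⟩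
    refine ⟨t, ⟨ht, by linarith⟩, ?_⟩
    simp only at hp
    have h1 : (p0 + Ct.mulVec k + dt) +
        t • ((p0 + Ct'.mulVec k + dt') - (p0 + Ct.mulVec k + dt)) = s • o1 + t • o2 := by
      rw [← hp]
      have hs1 : s = 1 - t := by linarith
      rw [hs1]
      module
    rw [h1]; exact hO ho1 ho2 hs ht hst
end
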